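/- Let n ≥ 3 and let λ, μ, ν be integers with 0 < λ ≤ μ ≤ ν ≤ λ + μ and ν ≥ 3, and set P = P_n(λ,μ,ν). Over an algebraically closed field 𝕜 of characteristic 2, let X ⊂ P be the hypersurface defined by a x² + b y² + c z² + f x y = 0 with a, b, c, f ∈ 𝕜[u_0,…,u_{n−1}] general homogeneous of degrees −λ+μ+ν, λ−μ+ν, λ+μ−ν, ν respectively, and set X° = X ∖ (x = y = 0). Then X is smooth along X ∖ X°, i.e. smooth at every point of X with x = y = 0. -/

import Mathlib

/-!
Formalization framework for "Stable rationality of higher dimensional conic bundles"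
(Ahmadinezhad–Okada).

We model a weighted-projective-space bundle `P` over `ℙ^{n-1}` (in particular the
`ℙ²`-bundle `P_n(k,l,m) = ℙ(𝒪(-k) ⊕ 𝒪(-l) ⊕ 𝒪(-m))`, and the `ℙ(1,1,2)`-bundle `R`)
through its Cox ring `K[u_0,…,u_{n-1}, x_0,…,x_{m-1}]`, bigraded by
`deg u_i = (1,0)`, `deg x_j = (w j, a j)`, together with the action of the
two-dimensional torus on the affine cone.  A member `X` of the complete linear
system `|𝒪_P(α,β)| = |α F + β D|` (`F` the pullback of the hyperplane class of
`ℙ^{n-1}`, `D` the tautological class) is recorded by a bihomogeneous polynomial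
`g` of bidegree `(α,β)`, and the projection `π : X → ℙ^{n-1}` is induced by the
coordinates `u_0,…,u_{n-1}`.

Geometric notions are rendered as follows (all are genuine definitions):

* a *general* (resp. *very general*) member of a linear system: the property holds
  on a nonempty principal Zariski-open subset of the parameter space (resp. away
  from countably many proper closed subsets);
* smoothness of `X`: the Jacobian criterion on the punctured affine cone (where the
  torus acts freely the quotient map is a torsor, so this is smoothness of `X`);
* the function field `K(X)`: the degree-`(0,0)` part of the fraction field of the
  homogeneous coordinate ring `Cox/(g)`, i.e. the subalgebra generated by ratios of
  bihomogeneous elements of equal bidegree;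
* rationality: `K(X)` is `K`-isomorphic to a purely transcendental extension of
  `K` (i.e. `X` is birational to a projective space);
* stable rationality: `K(X)(x_1,…,x_r) ≅_K K(y_1,…,y_s)` for some `r,s`
  (i.e. `X × ℙ^r` is birational to a projective space);
* normality: the local rings of the relevant locus of the affine cone are
  integrally closed (the punctured cone is a smooth torsor over `X`);
* terminal singularities: rendered as `X` normal with singular locus of
  codimension at least 3, which is the form terminality takes for the general
  members appearing in the paper;
* ℚ-factoriality together with `ρ(X) = 2` (i.e. the divisor class group of `X` is
  spanned up to torsion by the fibre class `F` and the tautological class `D`):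
  rendered by requiring every relevant bihomogeneous height-one prime `P` of the
  coordinate ring of `X` to contain a bihomogeneous element lying in no other such
  prime (so that `div(f) = k·P` and `[P] ∈ ℚ⟨F, D⟩`);
* ampleness of `𝒪_X(α,β)`: some multiple is very ample, rendered by requiring the
  bihomogeneous sections of that multiple to be base point free, to separate
  points, and to separate tangent vectors (modulo the torus directions) on the
  cone over `X`;
* `π`-ampleness of `-K_X`: by adjunction `-K_X = 𝒪_X(e,1)` with
  `e = n + Σ w - deg g`, and relative ampleness over the projective base means
  some twist `𝒪_X(e+N,1)` by pullback classes from `ℙ^{n-1}` is ample;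
* connectedness of the fibres of `π : X → ℙ^{n-1}`: no fibre admits a disjoint
  covering by two zero sets of families of weighted-homogeneous polynomials, each
  meeting the fibre (i.e. Zariski-connectedness of the fibres), and all fibres are
  nonempty;
* a conic bundle (Mori fibre space of relative dimension one, Definition 2.5 of
  the paper): `X` is irreducible (the ideal of `g` is prime), normal, has only
  terminal singularities, `π` has connected fibres, `-K_X` is `π`-ample, and
  `ρ(X) = 2`; all in the above renderings.
-/

open MvPolynomial

set_option maxHeartbeats 1600000
set_option synthInstance.maxHeartbeats 400000

namespace ConicBundleFormalization

noncomputable section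

variable (K : Type) [Field K]

/-! ### The Cox ring and bihomogeneity -/

/-- The Cox ring of an `(m-1)`-dimensional weighted-projective-space bundle over
`ℙ^{n-1}`: variables `u_i` (`i : Fin n`) of bidegree `(1,0)` and fibre variables
`x_j` (`j : Fin m`) of bidegree `(w j, a j)`. -/
abbrev Cox (n m : ℕ) : Type := MvPolynomial (Fin n ⊕ Fin m) K

/-- `p` is bihomogeneous of bidegree `(α, β)` for the grading `deg u_i = (1,0)`,
`deg x_j = (w j, a j)`. -/
def IsBihom (n m : ℕ) (w : Fin m → ℤ) (a : Fin m → ℕ) (α : ℤ) (β : ℕ)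
    (p : Cox K n m) : Prop :=
  ∀ e ∈ p.support,
    ((∑ i : Fin n, (e (Sum.inl i) : ℤ)) + ∑ j : Fin m, (e (Sum.inr j) : ℤ) * w j = α) ∧
    ((∑ j : Fin m, e (Sum.inr j) * a j) = β)

/-- A polynomial in `u_0, …, u_{n-1}` is homogeneous of degree `d ∈ ℤ`
(for `d < 0` this forces `p = 0`). -/
def IsHomogZ (n : ℕ) (d : ℤ) (p : MvPolynomial (Fin n) K) : Prop :=
  ∀ e ∈ p.support, (∑ i : Fin n, (e i : ℤ)) = d

/-- A polynomial in the fibre variables is weighted-homogeneous of degree `e` for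
the weights `a`. -/
def IsWHom (m : ℕ) (a : Fin m → ℕ) (e : ℕ) (q : MvPolynomial (Fin m) K) : Prop :=
  ∀ ex ∈ q.support, (∑ j : Fin m, ex j * a j) = e

/-! ### Genericity: general and very general members of a linear system -/

/-- Evaluation of a polynomial `D` in the coefficients of `p`; such `D` are the
polynomial functions on the parameter space of the linear system. -/
def evalCoeff {n m : ℕ} (p : Cox K n m)
    (D : MvPolynomial ((Fin n ⊕ Fin m) →₀ ℕ) K) : K :=
  MvPolynomial.eval (fun e => p.coeff e) D

/-- `Pred` holds for a *general* member of the complete linear system of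
bihomogeneous polynomials of bidegree `(α,β)`: it holds on a nonempty principal
Zariski-open subset of the parameter space. -/
def GenerallyHolds (n m : ℕ) (w : Fin m → ℤ) (a : Fin m → ℕ) (α : ℤ) (β : ℕ)
    (Pred : Cox K n m → Prop) : Prop :=
  ∃ D : MvPolynomial ((Fin n ⊕ Fin m) →₀ ℕ) K,
    (∃ p₀, IsBihom K n m w a α β p₀ ∧ evalCoeff K p₀ D ≠ 0) ∧
    ∀ p, IsBihom K n m w a α β p → evalCoeff K p D ≠ 0 → Pred p

/-- `Pred` holds for a *very general* member of the complete linear system of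
bihomogeneous polynomials of bidegree `(α,β)`: it holds away from countably many
proper Zariski-closed subsets of the parameter space. -/
def VeryGenerallyHolds (n m : ℕ) (w : Fin m → ℤ) (a : Fin m → ℕ) (α : ℤ) (β : ℕ)
    (Pred : Cox K n m → Prop) : Prop :=
  ∃ D : ℕ → MvPolynomial ((Fin n ⊕ Fin m) →₀ ℕ) K,
    (∀ i, ∃ p₀, IsBihom K n m w a α β p₀ ∧ evalCoeff K p₀ (D i) ≠ 0) ∧
    ∀ p, IsBihom K n m w a α β p → (∀ i, evalCoeff K p (D i) ≠ 0) → Pred p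

/-- Evaluation of a polynomial `D` in the coefficients of a quadruple
`(a,b,c,f)` of polynomials in `u_0,…,u_{n-1}`. -/
def evalCoeff4 {n : ℕ} (abcf : Fin 4 → MvPolynomial (Fin n) K)
    (D : MvPolynomial (Fin 4 × (Fin n →₀ ℕ)) K) : K :=
  MvPolynomial.eval (fun q => (abcf q.1).coeff q.2) D

/-- `Pred` holds for a *general* quadruple `(a,b,c,f)` of homogeneous polynomials
in `u_0,…,u_{n-1}` of respective degrees `degs 0, …, degs 3`. -/
def GenerallyHolds4 (n : ℕ) (degs : Fin 4 → ℤ)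
    (Pred : (Fin 4 → MvPolynomial (Fin n) K) → Prop) : Prop :=
  ∃ D : MvPolynomial (Fin 4 × (Fin n →₀ ℕ)) K,
    (∃ abcf : Fin 4 → MvPolynomial (Fin n) K,
      (∀ i, IsHomogZ K n (degs i) (abcf i)) ∧ evalCoeff4 K abcf D ≠ 0) ∧
    ∀ abcf : Fin 4 → MvPolynomial (Fin n) K,
      (∀ i, IsHomogZ K n (degs i) (abcf i)) → evalCoeff4 K abcf D ≠ 0 → Pred abcf

/-! ### Points of the bundle: the punctured affine cone and the torus action -/

/-- A point of the affine cone `𝔸^n × 𝔸^m` over the bundle. -/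
abbrev Pt (n m : ℕ) : Type := (Fin n → K) × (Fin m → K)

/-- Evaluation of a Cox ring element at a point of the affine cone. -/
def evalPt {n m : ℕ} (p : Pt K n m) (f : Cox K n m) : K :=
  MvPolynomial.eval (Sum.elim p.1 p.2) f

/-- Membership in the complement of the irrelevant locus
`V(u_0,…,u_{n-1}) ∪ V(x_0,…,x_{m-1})`. -/
def InCone {n m : ℕ} (p : Pt K n m) : Prop := p.1 ≠ 0 ∧ p.2 ≠ 0

/-- Equivalence of two cone points under the action of the torus `𝔾_m²`:
`(s,t)·(u,x) = (s·u_i, s^{w j} t^{a j}·x_j)`.  The points of the bundle are the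
equivalence classes of points of the punctured cone. -/
def ToricEq {n m : ℕ} (w : Fin m → ℤ) (a : Fin m → ℕ) (p q : Pt K n m) : Prop :=
  ∃ s t : Kˣ, (∀ i, q.1 i = (s : K) * p.1 i) ∧
    (∀ j, q.2 j = ((s ^ (w j) : Kˣ) : K) * (t : K) ^ (a j) * p.2 j)

/-- The punctured affine cone over the member `X = {g = 0}`. -/
def XCone {n m : ℕ} (g : Cox K n m) : Set (Pt K n m) :=
  {p | InCone K p ∧ evalPt K p g = 0}

/-! ### Smoothness via the Jacobian criterion on the cone -/

/-- The hypersurface `{g = 0}` is smooth along (the image of) `S ⊆ 𝔸^n × 𝔸^m`: at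
every point of `S` lying on the cone over `X` some partial derivative of `g` is
nonzero.  On loci where the torus acts freely this is the Jacobian criterion for
smoothness of `X` itself. -/
def JacobiSmoothOn {n m : ℕ} (g : Cox K n m) (S : Set (Pt K n m)) : Prop :=
  ∀ p ∈ S, evalPt K p g = 0 → ∃ v : Fin n ⊕ Fin m, evalPt K p (pderiv v g) ≠ 0

/-- The member `X = {g = 0}` of the linear system is smooth (nonsingular). -/
def IsSmoothModel {n m : ℕ} (g : Cox K n m) : Prop :=
  JacobiSmoothOn K g {p | InCone K p}

/-! ### The function field, rationality, and stable rationality -/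

/-- The homogeneous coordinate ring `Cox/(g)` of the member `X = {g = 0}`,
i.e. the coordinate ring of the affine cone over `X`. -/
abbrev coneRing {n m : ℕ} (g : Cox K n m) : Type :=
  Cox K n m ⧸ Ideal.span {g}

/-- The total fraction ring of the affine cone over `X`; the function field of the
cone when `g` is prime. -/
def FracCone {n m : ℕ} (g : Cox K n m) : Type := FractionRing (coneRing K g)

instance {n m : ℕ} (g : Cox K n m) : CommRing (FracCone K g) :=
  inferInstanceAs (CommRing (FractionRing (coneRing K g)))

instance {n m : ℕ} (g : Cox K n m) : Algebra K (FracCone K g) :=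
  inferInstanceAs (Algebra K (FractionRing (coneRing K g)))

instance {n m : ℕ} (g : Cox K n m) : Algebra (coneRing K g) (FracCone K g) :=
  inferInstanceAs (Algebra (coneRing K g) (FractionRing (coneRing K g)))

/-- The canonical map from the Cox ring to the fraction ring of the cone over `X`. -/
def toFrac {n m : ℕ} (g : Cox K n m) : Cox K n m →+* FracCone K g :=
  (algebraMap (coneRing K g) (FracCone K g)).comp
    (Ideal.Quotient.mk (Ideal.span {g}))

/-- The set of degree-`(0,0)` fractions on the cone over `X`: ratios `p/q` of
bihomogeneous elements of equal bidegree (phrased multiplicatively, avoiding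
inverses). -/
def ratioSet {n m : ℕ} (w : Fin m → ℤ) (a : Fin m → ℕ) (g : Cox K n m) :
    Set (FracCone K g) :=
  {φ | ∃ (α : ℤ) (β : ℕ) (p q : Cox K n m),
    IsBihom K n m w a α β p ∧ IsBihom K n m w a α β q ∧
    toFrac K g q ≠ 0 ∧ φ * toFrac K g q = toFrac K g p}

/-- The `K`-algebra of rational functions on `X = {g = 0}`: the fractions of
degree `(0,0)`.  When `g` is prime this is the function field `K(X)`. -/
def functionFieldModel {n m : ℕ} (w : Fin m → ℤ) (a : Fin m → ℕ) (g : Cox K n m) :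
    Subalgebra K (FracCone K g) :=
  Algebra.adjoin K (ratioSet K w a g)

/-- `X = {g = 0}` is rational: its function field is `K`-isomorphic to a purely
transcendental extension `K(y_1,…,y_N)` of `K`, i.e. `X` is birational to a
projective space. -/
def IsRationalModel {n m : ℕ} (w : Fin m → ℤ) (a : Fin m → ℕ) (g : Cox K n m) :
    Prop :=
  ∃ N : ℕ, Nonempty
    (functionFieldModel K w a g ≃ₐ[K] FractionRing (MvPolynomial (Fin N) K))

/-- `X = {g = 0}` is stably rational: `X × ℙ^r` is birational to a projective
space for some `r`, i.e. `K(X)(x_1,…,x_r) ≅_K K(y_1,…,y_s)` for some `r, s`. -/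
def IsStablyRationalModel {n m : ℕ} (w : Fin m → ℤ) (a : Fin m → ℕ)
    (g : Cox K n m) : Prop :=
  ∃ r s : ℕ, Nonempty
    ((FractionRing (MvPolynomial (Fin r) (functionFieldModel K w a g)))
      ≃ₐ[K] FractionRing (MvPolynomial (Fin s) K))

/-! ### Normality, terminal singularities, class group, ampleness, fibres -/

/-- A prime of the Cox ring is *relevant* if it does not contain either component
of the irrelevant ideal `(u_0,…,u_{n-1}) ∩ (x_0,…,x_{m-1})`. -/
def RelevantPrime {n m : ℕ} (P : Ideal (Cox K n m)) : Prop :=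
  (∃ i, X (Sum.inl i) ∉ P) ∧ (∃ j, X (Sum.inr j) ∉ P)

/-- `X = {g = 0}` is normal: the local rings of the relevant locus of its affine
cone are integrally closed (the punctured cone is a smooth torsor over `X`, so
this is normality of `X`). -/
def IsNormalModel {n m : ℕ} (g : Cox K n m) : Prop :=
  ∀ P : PrimeSpectrum (coneRing K g),
    ((∃ i, Ideal.Quotient.mk (Ideal.span {g}) (X (Sum.inl i)) ∉ P.asIdeal) ∧
     (∃ j, Ideal.Quotient.mk (Ideal.span {g}) (X (Sum.inr j)) ∉ P.asIdeal)) →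
    IsIntegrallyClosed (Localization.AtPrime P.asIdeal)

/-- The singular locus of `X = {g = 0}` has codimension at least `c`: every
relevant prime of the Cox ring containing `g` and all its partial derivatives has
height at least `c + 1` (the height in the cone exceeds the codimension in `X`
by one). -/
def SingularLocusCodimAtLeast {n m : ℕ} (g : Cox K n m) (c : ℕ) : Prop :=
  ∀ P : PrimeSpectrum (Cox K n m), RelevantPrime K P.asIdeal →
    g ∈ P.asIdeal → (∀ v : Fin n ⊕ Fin m, pderiv v g ∈ P.asIdeal) →
    ((c + 1 : ℕ) : WithBot (WithTop ℕ)) ≤ ringKrullDim (Localization.AtPrime P.asIdeal)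

/-- Rendering of "`X` has only terminal singularities" for the members considered
in the paper: `X` is normal and its singular locus has codimension at least 3
(cf. the proof of Lemma 2.8, where the general members with `2m > d > l+m` have
ordinary double points along a nonsingular center of codimension 3). -/
def HasOnlyTerminalSingularitiesModel {n m : ℕ} (g : Cox K n m) : Prop :=
  IsNormalModel K g ∧ SingularLocusCodimAtLeast K g 3

/-- An ideal of the Cox ring is bihomogeneous if it is generated by its
bihomogeneous elements. -/
def IsBihomIdeal {n m : ℕ} (w : Fin m → ℤ) (a : Fin m → ℕ)
    (P : Ideal (Cox K n m)) : Prop :=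
  P ≤ Ideal.span {f | f ∈ P ∧ ∃ α β, IsBihom K n m w a α β f}

/-- A prime divisor of `X = {g = 0}`: a relevant bihomogeneous prime of the Cox
ring containing `g` of height 2 (height 1 over `(g)`). -/
def IsPrimeDivisorOn {n m : ℕ} (w : Fin m → ℤ) (a : Fin m → ℕ) (g : Cox K n m)
    (P : PrimeSpectrum (Cox K n m)) : Prop :=
  g ∈ P.asIdeal ∧ RelevantPrime K P.asIdeal ∧ IsBihomIdeal K w a P.asIdeal ∧
    ringKrullDim (Localization.AtPrime P.asIdeal) = (2 : WithBot (WithTop ℕ))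

/-- Rendering of "`X` is ℚ-factorial with `ρ(X) = 2`", i.e. the divisor class
group of `X` is spanned up to torsion by the pullback `F` of the hyperplane class
and the tautological class `D`: every prime divisor `P` of `X` carries a
bihomogeneous form `f` vanishing on `P` and on no other prime divisor, so that
`div(f) = k·P` for some `k ≥ 1` and hence `[P] ∈ ℚ⟨F,D⟩` in `Cl(X) ⊗ ℚ`. -/
def ClassGroupSpannedByFD {n m : ℕ} (w : Fin m → ℤ) (a : Fin m → ℕ)
    (g : Cox K n m) : Prop :=
  ∀ P : PrimeSpectrum (Cox K n m), IsPrimeDivisorOn K w a g P →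
    ∃ (α : ℤ) (β : ℕ) (f : Cox K n m),
      f ∉ Ideal.span {g} ∧ IsBihom K n m w a α β f ∧ f ∈ P.asIdeal ∧
      ∀ Q : PrimeSpectrum (Cox K n m), IsPrimeDivisorOn K w a g Q → Q ≠ P →
        f ∉ Q.asIdeal

/-- Rendering of "`ρ(X) ≥ 3`": the divisor class group of `X` is not spanned up to
torsion by the fibre class `F` and the tautological class `D`. -/
def PicardRankAtLeastThree {n m : ℕ} (w : Fin m → ℤ) (a : Fin m → ℕ)
    (g : Cox K n m) : Prop :=
  ¬ ClassGroupSpannedByFD K w a g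

/-- The cone over the fibre of `π : X → ℙ^{n-1}` over the point `[u] ∈ ℙ^{n-1}`. -/
def fibreCone {n m : ℕ} (g : Cox K n m) (u : Fin n → K) : Set (Fin m → K) :=
  {v | v ≠ 0 ∧ evalPt K (u, v) g = 0}

/-- The fibres of `π : X → ℙ^{n-1}` are nonempty and connected: no fibre can be
covered by two disjoint nonempty closed subsets, closed subsets of the fibre
being cut out by weighted-homogeneous polynomials in the fibre variables. -/
def FibresNonemptyAndConnected {n m : ℕ} (a : Fin m → ℕ) (g : Cox K n m) : Prop :=
  ∀ u : Fin n → K, u ≠ 0 →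
    (fibreCone K g u).Nonempty ∧
    ∀ A B : Set (MvPolynomial (Fin m) K),
      (∀ q ∈ A ∪ B, ∃ e, IsWHom K m a e q) →
      (∀ v ∈ fibreCone K g u,
        (∀ q ∈ A, MvPolynomial.eval v q = 0) ∨ (∀ q ∈ B, MvPolynomial.eval v q = 0)) →
      (∀ v ∈ fibreCone K g u,
        ¬ ((∀ q ∈ A, MvPolynomial.eval v q = 0) ∧ (∀ q ∈ B, MvPolynomial.eval v q = 0))) →
      ¬ ((∃ v ∈ fibreCone K g u, ∀ q ∈ A, MvPolynomial.eval v q = 0) ∧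
         (∃ v ∈ fibreCone K g u, ∀ q ∈ B, MvPolynomial.eval v q = 0))

/-- The infinitesimal generator of the first torus factor at a cone point. -/
def orbitVec₁ {n m : ℕ} (w : Fin m → ℤ) (p : Pt K n m) : (Fin n ⊕ Fin m) → K :=
  Sum.elim (fun i => p.1 i) (fun j => (w j : K) * p.2 j)

/-- The infinitesimal generator of the second torus factor at a cone point. -/
def orbitVec₂ {n m : ℕ} (a : Fin m → ℕ) (p : Pt K n m) : (Fin n ⊕ Fin m) → K :=
  Sum.elim (fun _ => 0) (fun j => (a j : K) * p.2 j)

/-- The bihomogeneous forms of bidegree `(α,β)` have no base point on `X`. -/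
def BasePointFreeOnX {n m : ℕ} (w : Fin m → ℤ) (a : Fin m → ℕ) (g : Cox K n m)
    (α : ℤ) (β : ℕ) : Prop :=
  ∀ p ∈ XCone K g, ∃ s, IsBihom K n m w a α β s ∧ evalPt K p s ≠ 0

/-- The bihomogeneous forms of bidegree `(α,β)` separate the points of `X`. -/
def SeparatesPointsOnX {n m : ℕ} (w : Fin m → ℤ) (a : Fin m → ℕ) (g : Cox K n m)
    (α : ℤ) (β : ℕ) : Prop :=
  ∀ p ∈ XCone K g, ∀ q ∈ XCone K g, ¬ ToricEq K w a p q →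
    ∃ s₁ s₂, IsBihom K n m w a α β s₁ ∧ IsBihom K n m w a α β s₂ ∧
      evalPt K p s₁ * evalPt K q s₂ ≠ evalPt K q s₁ * evalPt K p s₂

/-- The bihomogeneous forms of bidegree `(α,β)` separate the tangent vectors of
`X`: for every cone point `p` of `X` and every tangent vector `t` of the cone over
`X` at `p` not tangent to the torus orbit, some form vanishing at `p` has nonzero
derivative along `t`. -/
def SeparatesTangentsOnX {n m : ℕ} (w : Fin m → ℤ) (a : Fin m → ℕ) (g : Cox K n m)
    (α : ℤ) (β : ℕ) : Prop :=
  ∀ p ∈ XCone K g, ∀ t : (Fin n ⊕ Fin m) → K,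
    (∑ v : Fin n ⊕ Fin m, t v * evalPt K p (pderiv v g)) = 0 →
    t ∉ Submodule.span K {orbitVec₁ K w p, orbitVec₂ K a p} →
    ∃ s, IsBihom K n m w a α β s ∧ evalPt K p s = 0 ∧
      (∑ v : Fin n ⊕ Fin m, t v * evalPt K p (pderiv v s)) ≠ 0

/-- The class `𝒪_X(α,β)` is ample on `X = {g = 0}`: some positive multiple is very
ample, i.e. its forms are base point free on `X` and separate points and tangent
vectors. -/
def IsAmpleClassOnX {n m : ℕ} (w : Fin m → ℤ) (a : Fin m → ℕ) (g : Cox K n m)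
    (α : ℤ) (β : ℕ) : Prop :=
  ∃ t : ℕ, 0 < t ∧
    BasePointFreeOnX K w a g (t * α) (t * β) ∧
    SeparatesPointsOnX K w a g (t * α) (t * β) ∧
    SeparatesTangentsOnX K w a g (t * α) (t * β)

/-- The canonical class of the ambient bundle `P`, by the toric formula
`K_P = -Σ deg(variables)`. -/
def ambientCanonicalClass (n m : ℕ) (w : Fin m → ℤ) : ℤ × ℤ :=
  (-(n : ℤ) - ∑ j : Fin m, w j, -(m : ℤ))

/-- The anticanonical class `-K_X = -(K_P + X)|_X` of a member `X ∈ |𝒪_P(α,β)|`,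
by adjunction. -/
def memberAntiCanonicalClass (n m : ℕ) (w : Fin m → ℤ) (α : ℤ) (β : ℕ) : ℤ × ℤ :=
  (-((ambientCanonicalClass n m w).1 + α), -((ambientCanonicalClass n m w).2 + β))

/-- `-K_X` is `π`-ample for the projection `π : X → ℙ^{n-1}`: some twist of `-K_X`
by the pullback of a (sufficiently ample) divisor on the base is ample. -/
def AntiCanonicalIsRelativelyAmple {n m : ℕ} (w : Fin m → ℤ) (a : Fin m → ℕ)
    (g : Cox K n m) (α : ℤ) (β : ℕ) : Prop :=
  ∃ N : ℤ,
    IsAmpleClassOnX K w a g ((memberAntiCanonicalClass n m w α β).1 + N)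
      (memberAntiCanonicalClass n m w α β).2.toNat

/-- Rendering of Definition 2.5 of the paper: the projection
`π : X → ℙ^{n-1}` of the member `X = {g = 0} ∈ |𝒪_P(d,2)|` of the `ℙ²`-bundle
`P = P_n(w 0, w 1, w 2)` over `ℙ^{n-1}` is a *conic bundle*, i.e. a Mori fibre
space of relative dimension one: `X` is an (irreducible, normal, projective)
variety with only terminal singularities, `π` has connected fibres, `-K_X` is
`π`-ample, and `X` is ℚ-factorial of Picard rank `ρ(X) = 2`.  (Being embedded in
`|𝒪_P(d,2)|` of a projectivized split rank-3 bundle, this is an *embedded* conic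
bundle in the sense of Definition 2.6.) -/
structure IsConicBundleModel (n : ℕ) (w : Fin 3 → ℤ) (d : ℤ) (g : Cox K n 3) :
    Prop where
  bihom : IsBihom K n 3 w (fun _ => 1) d 2 g
  integral : (Ideal.span {g} : Ideal (Cox K n 3)).IsPrime
  normal : IsNormalModel K g
  terminal : HasOnlyTerminalSingularitiesModel K g
  connectedFibres : FibresNonemptyAndConnected K (fun _ => 1) g
  antiCanonicalRelAmple :
    AntiCanonicalIsRelativelyAmple K w (fun _ => 1) g d 2
  picardRankTwo : ClassGroupSpannedByFD K w (fun _ => 1) g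

/-! ### The discriminant of a conic bundle -/

/-- The coefficient of the monomial `x^e` (in the fibre variables) of `g`, as a
polynomial on the base. -/
def fibreCoeff {n m : ℕ} (g : Cox K n m) (e : Fin m →₀ ℕ) :
    MvPolynomial (Fin n) K :=
  ((MvPolynomial.sumAlgEquiv K (Fin m) (Fin n))
    (MvPolynomial.rename Sum.swap g)).coeff e

/-- The symmetric matrix of the fibrewise quadratic form of a member
`X = {g = 0} ∈ |𝒪_P(d,2)|` (over a field of characteristic zero). -/
def quadraticMatrix {n : ℕ} (g : Cox K n 3) :
    Matrix (Fin 3) (Fin 3) (MvPolynomial (Fin n) K) :=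
  fun i j =>
    if i = j then fibreCoeff K g (Finsupp.single i 2)
    else MvPolynomial.C ((2 : K)⁻¹) *
      fibreCoeff K g (Finsupp.single i 1 + Finsupp.single j 1)

/-- The equation of the discriminant divisor `Δ ⊂ ℙ^{n-1}` of the conic bundle
`π : X → ℙ^{n-1}`, `X = {g = 0}`: the determinant of the associated symmetric
matrix. -/
def discriminantPoly {n : ℕ} (g : Cox K n 3) : MvPolynomial (Fin n) K :=
  (quadraticMatrix K g).det

/-- The complete linear system `|k·K_{ℙ^{n-1}} + Δ|` is nonempty, where `Δ` is the
discriminant divisor of the conic bundle `X = {g = 0}`: the divisor class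
`𝒪(deg Δ - k·n)` on `ℙ^{n-1}` contains an effective divisor. -/
def KMultipleplusDiscriminantEffective {n : ℕ} (g : Cox K n 3) (k : ℕ) : Prop :=
  discriminantPoly K g ≠ 0 ∧
    ∃ h : MvPolynomial (Fin n) K, h ≠ 0 ∧
      IsHomogZ K n (((discriminantPoly K g).totalDegree : ℤ) - k * n) h

/-- `π : X → ℙ^{n-1}` is flat, i.e. no fibre is two-dimensional: `g` does not
vanish identically on any fibre of the ambient bundle.  Together with smoothness
of `X` this renders a *standard* conic bundle. -/
def ProjectionIsFlat {n m : ℕ} (g : Cox K n m) : Prop :=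
  ∀ u : Fin n → K, u ≠ 0 → ∃ v : Fin m → K, evalPt K (u, v) g ≠ 0

end

end ConicBundleFormalization

namespace ConicBundleFormalization

noncomputable section

variable (K : Type) [Field K]

/-! ### The special members `a x² + b y² + c z² + f x y` and the associated double
cover data in characteristic 2 -/

/-- The special member `X = {a x² + b y² + c z² + f x y = 0}` of
`|𝒪_P(λ+μ+ν, 2)|`, `P = P_n(λ,μ,ν)`, built from a quadruple `(a,b,c,f)` of
polynomials on the base (equation (3.1) of the paper). -/
def specialMemberX {n : ℕ} (abcf : Fin 4 → MvPolynomial (Fin n) K) : Cox K n 3 :=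
  rename Sum.inl (abcf 0) * X (Sum.inr 0) ^ 2 +
  rename Sum.inl (abcf 1) * X (Sum.inr 1) ^ 2 +
  rename Sum.inl (abcf 2) * X (Sum.inr 2) ^ 2 +
  rename Sum.inl (abcf 3) * X (Sum.inr 0) * X (Sum.inr 1)

/-- The hypersurface `Z = {a x² + b y² + c z̄ + f x y = 0}` in the
`ℙ(1,1,2)`-bundle `R` over `ℙ^{n-1}` (with `z̄` the third fibre variable, of
weight 2), the image of `X` under the purely inseparable double cover `P → R` in
characteristic 2. -/
def specialMemberZ {n : ℕ} (abcf : Fin 4 → MvPolynomial (Fin n) K) : Cox K n 3 :=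
  rename Sum.inl (abcf 0) * X (Sum.inr 0) ^ 2 +
  rename Sum.inl (abcf 1) * X (Sum.inr 1) ^ 2 +
  rename Sum.inl (abcf 2) * X (Sum.inr 2) +
  rename Sum.inl (abcf 3) * X (Sum.inr 0) * X (Sum.inr 1)

/-! ### Admissible critical points (Definition 3.5 of the paper) -/

/-- A polynomial `F` in `N` variables over a field of characteristic 2 is in
*admissible normal form* at the origin: its linear part vanishes (a critical
point) and, up to an additive constant and higher-order terms,
`F = α + x₀x₁ + x₂x₃ + ⋯ + x_{N-2}x_{N-1}` if `N` is even, and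
`F = α + βx₀² + x₁x₂ + ⋯ + x_{N-2}x_{N-1} + (nonzero)·x₀³ + ⋯` if `N` is odd. -/
def AdmissibleNormalForm {N : ℕ} (F : MvPolynomial (Fin N) K) : Prop :=
  (∀ i, F.coeff (Finsupp.single i 1) = 0) ∧
  (N % 2 = 0 →
    (∀ i, F.coeff (Finsupp.single i 2) = 0) ∧
    (∀ i j : Fin N, (i : ℕ) < (j : ℕ) →
      F.coeff (Finsupp.single i 1 + Finsupp.single j 1) =
        (if (i : ℕ) % 2 = 0 ∧ (j : ℕ) = (i : ℕ) + 1 then 1 else 0))) ∧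
  (N % 2 = 1 →
    (∀ i : Fin N, (i : ℕ) ≠ 0 → F.coeff (Finsupp.single i 2) = 0) ∧
    (∀ i j : Fin N, (i : ℕ) < (j : ℕ) →
      F.coeff (Finsupp.single i 1 + Finsupp.single j 1) =
        (if (i : ℕ) % 2 = 1 ∧ (j : ℕ) = (i : ℕ) + 1 then 1 else 0)) ∧
    (∀ h0 : 0 < N, F.coeff (Finsupp.single (⟨0, h0⟩ : Fin N) 3) ≠ 0))

/-- A local function `F` (a polynomial in the local coordinates indexed by `ι`,
centred at the origin) has an *admissible critical point* at the origin: after a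
suitable (linear) change of coordinates it is in admissible normal form. -/
def AdmissibleLocalFunction {ι : Type} [Fintype ι] (F : MvPolynomial ι K) : Prop :=
  ∃ (N : ℕ) (e : ι ≃ Fin N) (T : Matrix (Fin N) (Fin N) K), IsUnit T.det ∧
    AdmissibleNormalForm K
      ((aeval (fun i : ι => ∑ j : Fin N, MvPolynomial.C (T (e i) j) * X j)) F)

/-- The local expression of the section `z̄` of `𝓛²` on the chart `x = 1` of `Z`
(multiplied by the square unit `c̃²`, i.e. computed with respect to the local
generator `c̃·ξ` of `𝓛`): the polynomial `c·(a + b·y² + f·y)` in the base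
variables and the remaining fibre variable `y`. -/
def chartPolyX {n : ℕ} (abcf : Fin 4 → MvPolynomial (Fin n) K) :
    MvPolynomial (Fin n ⊕ Fin 1) K :=
  rename Sum.inl (abcf 2) *
    (rename Sum.inl (abcf 0) + rename Sum.inl (abcf 1) * X (Sum.inr 0) ^ 2 +
      rename Sum.inl (abcf 3) * X (Sum.inr 0))

/-- The local expression of the section `z̄` on the chart `y = 1` of `Z`:
the polynomial `c·(a·x² + b + f·x)`. -/
def chartPolyY {n : ℕ} (abcf : Fin 4 → MvPolynomial (Fin n) K) :
    MvPolynomial (Fin n ⊕ Fin 1) K :=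
  rename Sum.inl (abcf 2) *
    (rename Sum.inl (abcf 0) * X (Sum.inr 0) ^ 2 + rename Sum.inl (abcf 1) +
      rename Sum.inl (abcf 3) * X (Sum.inr 0))

/-- Translation of a chart polynomial to local coordinates centred at the point
with base coordinates `u0` (normalized by `u0 i0 = 1`) and fibre coordinate `y0`:
substitute `u_{i0} ↦ 1`, `u_j ↦ u_j + u0 j` and `y ↦ y + y0`.  The variables are
the genuine local coordinates `{u_j : j ≠ i0} ∪ {y}` of `Z` at that point. -/
def localAt {n : ℕ} (i0 : Fin n) (u0 : Fin n → K) (y0 : K)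
    (G : MvPolynomial (Fin n ⊕ Fin 1) K) :
    MvPolynomial ({ j : Fin n // j ≠ i0 } ⊕ Fin 1) K :=
  aeval (Sum.elim
    (fun j => if h : j = i0 then 1 else X (Sum.inl ⟨j, h⟩) + MvPolynomial.C (u0 j))
    (fun _ => X (Sum.inr 0) + MvPolynomial.C y0)) G

/-- The section `z̄` of `𝓛²` on `Z = {gZ = 0}` has a *critical point* at the point
below the normalized cone point `p` (with `u_{i0} = 1` and the fibre coordinate
`jfix ∈ {x, y}` normalized to 1): the differential of `z̄` vanishes on the tangent
space of `Z` at that point, i.e. every chart tangent vector `t` of `Z` has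
vanishing `z̄`-component. -/
def CriticalPointOfZbar {n : ℕ} (gZ : Cox K n 3) (i0 : Fin n) (jfix : Fin 3)
    (p : Pt K n 3) : Prop :=
  ∀ t : (Fin n ⊕ Fin 3) → K, t (Sum.inl i0) = 0 → t (Sum.inr jfix) = 0 →
    (∑ v : Fin n ⊕ Fin 3, t v * evalPt K p (pderiv v gZ)) = 0 →
    t (Sum.inr 2) = 0

/-- `p` is a singular point of the cone over `X = {g = 0}`. -/
def SingularConePoint {n m : ℕ} (g : Cox K n m) (p : Pt K n m) : Prop :=
  p ∈ XCone K g ∧ ∀ v : Fin n ⊕ Fin m, evalPt K p (pderiv v g) = 0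

end

end ConicBundleFormalization

namespace ConicBundleFormalization

open MvPolynomial


namespace CBF

variable {K : Type} [Field K]

lemma degree_fin_sum {n : ℕ} (e : Fin n →₀ ℕ) : Finsupp.degree e = ∑ i : Fin n, e i :=
  Finset.sum_subset (Finset.subset_univ _) (by
    intro x _ hx
    simpa using Finsupp.notMem_support_iff.mp hx)

lemma degree_add {σ : Type*} (a b : σ →₀ ℕ) :
    Finsupp.degree (a + b) = Finsupp.degree a + Finsupp.degree b := by
  simp only [Finsupp.degree_eq_weight_one, map_add]

lemma degree_single {σ : Type*} (i : σ) (k : ℕ) :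
    Finsupp.degree (Finsupp.single i k) = k := by
  classical
  simp [Finsupp.degree_eq_weight_one, Finsupp.weight_apply, Finsupp.sum_single_index]

lemma isHomogeneous_iff_degree {n : ℕ} {p : MvPolynomial (Fin n) K} {m : ℕ} :
    p.IsHomogeneous m ↔ ∀ e ∈ p.support, Finsupp.degree e = m := by
  constructor
  · intro h e he
    rw [Finsupp.degree_eq_weight_one]
    exact h (mem_support_iff.mp he)
  · intro h e he
    have h' := h e (mem_support_iff.mpr he)
    rw [Finsupp.degree_eq_weight_one] at h'
    exact h'

-- homogeneity of pderiv
lemma isHomogeneous_pderiv {n : ℕ} {p : MvPolynomial (Fin n) K} {m : ℕ}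
    (hp : p.IsHomogeneous m) (i : Fin n) : (pderiv i p).IsHomogeneous (m - 1) := by
  classical
  rw [p.as_sum, map_sum]
  apply IsHomogeneous.sum
  intro e he
  rw [pderiv_monomial]
  rcases Nat.eq_zero_or_pos (e i) with h0 | h0
  · rw [h0]
    simp only [Nat.cast_zero, mul_zero, map_zero]
    exact isHomogeneous_zero _ _ _
  · apply isHomogeneous_monomial
    have hdeg : Finsupp.degree e = m := (isHomogeneous_iff_degree.mp hp) e he
    have hee : e - Finsupp.single i 1 + Finsupp.single i 1 = e := by
      ext j
      rcases eq_or_ne j i with rfl | hj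
      · simp [Finsupp.single_apply]
        omega
      · simp [Finsupp.single_apply, hj.symm, Ne.symm hj]
    have h2 := degree_add (e - Finsupp.single i 1) (Finsupp.single i 1)
    rw [hee, degree_single] at h2
    omega

end CBF

namespace CBF2
open CBF

variable {K : Type} [Field K]

lemma homogeneousComponent_mul_homogeneous {n : ℕ} (q g : MvPolynomial (Fin n) K) {δ M : ℕ}
    (hg : g.IsHomogeneous δ) (hδ : δ ≤ M) :
    homogeneousComponent M (q * g) = homogeneousComponent (M - δ) q * g := by
  classical
  ext d
  rw [coeff_homogeneousComponent, coeff_mul, coeff_mul]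
  by_cases hd : Finsupp.degree d = M
  · rw [if_pos hd]
    apply Finset.sum_congr rfl
    rintro ⟨a, b⟩ hab
    rw [Finset.HasAntidiagonal.mem_antidiagonal] at hab
    dsimp only at hab ⊢
    rw [coeff_homogeneousComponent]
    by_cases hb : MvPolynomial.coeff b g = 0
    · simp [hb]
    · have hbd : Finsupp.degree b = δ := by
        rw [Finsupp.degree_eq_weight_one]; exact hg hb
      have hda : Finsupp.degree a + Finsupp.degree b = M := by
        rw [← degree_add, hab, hd]
      rw [if_pos (by omega)]
  · rw [if_neg hd]
    symm
    apply Finset.sum_eq_zero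
    rintro ⟨a, b⟩ hab
    rw [Finset.HasAntidiagonal.mem_antidiagonal] at hab
    dsimp only at hab ⊢
    rw [coeff_homogeneousComponent]
    by_cases hb : MvPolynomial.coeff b g = 0
    · simp [hb]
    · have hbd : Finsupp.degree b = δ := by
        rw [Finsupp.degree_eq_weight_one]; exact hg hb
      have hna : Finsupp.degree a ≠ M - δ := by
        intro ha
        apply hd
        rw [← hab, degree_add]
        omega
      rw [if_neg hna, zero_mul]

end CBF2

namespace CBF3
open CBF CBF2

variable {K : Type} [Field K]

theorem aux_generic (n dN : ℕ) (hn : 0 < n) [IsAlgClosed K]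
    (c₀ : MvPolynomial (Fin n) K) (hhom : c₀.IsHomogeneous dN)
    (hsm : ∀ u : Fin n → K, eval u c₀ = 0 → (∀ i, eval u (pderiv i c₀) = 0) → u = 0) :
    ∃ D : MvPolynomial (Fin n →₀ ℕ) K,
      (MvPolynomial.eval (fun e => MvPolynomial.coeff e c₀) D ≠ 0) ∧
      ∀ c : MvPolynomial (Fin n) K, c.IsHomogeneous dN →
        MvPolynomial.eval (fun e => MvPolynomial.coeff e c) D ≠ 0 →
        ∀ u : Fin n → K, eval u c = 0 → (∀ i, eval u (pderiv i c) = 0) → u = 0 := by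
  classical
  set g : Option (Fin n) → MvPolynomial (Fin n) K :=
    fun o => o.elim c₀ (fun j => pderiv j c₀) with hg
  have hgn : g none = c₀ := rfl
  have hgs : ∀ j, g (some j) = pderiv j c₀ := fun _ => rfl
  set I₀ : Ideal (MvPolynomial (Fin n) K) := Ideal.span (Set.range g) with hI₀
  -- powers of variables in the ideal
  have hrad : ∀ i : Fin n, ∃ m : ℕ, (X i : MvPolynomial (Fin n) K) ^ m ∈ I₀ := by
    intro i
    have hX : (X i : MvPolynomial (Fin n) K) ∈ I₀.radical := by
      rw [← MvPolynomial.vanishingIdeal_zeroLocus_eq_radical (K := K)]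
      intro x hx
      have hx0 : x = 0 := by
        apply hsm
        · exact hgn ▸ hx _ (Ideal.subset_span ⟨none, rfl⟩)
        · intro jj
          exact hgs jj ▸ hx _ (Ideal.subset_span ⟨some jj, rfl⟩)
      rw [hx0]
      simp
    exact Ideal.mem_radical_iff.mp hX
  choose kk hkk using hrad
  obtain ⟨k, hdk, hkX⟩ : ∃ k, dN < k ∧
      ∀ i, (X i : MvPolynomial (Fin n) K) ^ k ∈ I₀ := by
    refine ⟨Finset.univ.sup kk + dN + 1, by omega, fun i => ?_⟩
    have hle : kk i ≤ Finset.univ.sup kk := Finset.le_sup (Finset.mem_univ i)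
    have hsplit : Finset.univ.sup kk + dN + 1 = (Finset.univ.sup kk + dN + 1 - kk i) + kk i := by
      omega
    rw [hsplit, pow_add]
    exact Ideal.mul_mem_left _ _ (hkk i)
  set N : ℕ := n * k with hN
  have hNd : dN ≤ N := le_trans (le_of_lt hdk) (Nat.le_mul_of_pos_left k hn)
  have hNpick : ∀ e : Fin n →₀ ℕ, Finsupp.degree e = N → ∃ i, k ≤ e i := by
    intro e he
    by_contra hcon
    push_neg at hcon
    have h1 : ∑ i : Fin n, e i ≤ ∑ _i : Fin n, (k - 1) :=
      Finset.sum_le_sum fun i _ => by have := hcon i; omega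
    rw [degree_fin_sum] at he
    simp only [Finset.sum_const, Finset.card_univ, Fintype.card_fin, smul_eq_mul] at h1
    have h2 : n * (k - 1) + n * 1 = n * k := by
      rw [← Nat.mul_add]
      congr 1
      omega
    rw [Nat.mul_one] at h2
    omega
  have hmon : ∀ e : Fin n →₀ ℕ, Finsupp.degree e = N →
      (monomial e (1 : K) : MvPolynomial (Fin n) K) ∈ I₀ := by
    intro e he
    obtain ⟨i, hi⟩ := hNpick e he
    have hsle : Finsupp.single i k ≤ e := by
      rw [Finsupp.single_le_iff]
      exact hi
    have heq : (monomial e (1 : K) : MvPolynomial (Fin n) K) =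
        monomial (e - Finsupp.single i k) 1 * (X i) ^ k := by
      rw [X_pow_eq_monomial, monomial_mul, one_mul, tsub_add_cancel_of_le hsle]
    rw [heq]
    exact Ideal.mul_mem_left _ _ (hkX i)
  -- choose certificates
  have hcomb : ∀ e : Fin n →₀ ℕ, ∃ q : Option (Fin n) → MvPolynomial (Fin n) K,
      Finsupp.degree e = N → ∑ o, q o * g o = monomial e (1 : K) := by
    intro e
    by_cases he : Finsupp.degree e = N
    · obtain ⟨q, hq⟩ := Ideal.mem_span_range_iff_exists_fun.mp (hmon e he)
      exact ⟨q, fun _ => hq⟩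
    · exact ⟨0, fun h => absurd h he⟩
  choose q hq using hcomb
  -- homogeneous parts
  set δ : Option (Fin n) → ℕ := fun o => o.elim dN (fun _ => dN - 1) with hδ
  have hgδ : ∀ o, (g o).IsHomogeneous (δ o) := by
    rintro (_ | j)
    · exact hhom
    · exact isHomogeneous_pderiv hhom j
  have hδN : ∀ o, δ o ≤ N := by
    rintro (_ | j) <;> simp only [hδ, Option.elim] <;> omega
  set hh : (Fin n →₀ ℕ) → Option (Fin n) → MvPolynomial (Fin n) K :=
    fun e o => homogeneousComponent (N - δ o) (q e o) with hhh
  have hhhom : ∀ e o, (hh e o).IsHomogeneous (N - δ o) := fun e o =>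
    homogeneousComponent_isHomogeneous _ _
  have hwit : ∀ e : Fin n →₀ ℕ, Finsupp.degree e = N →
      ∑ o, hh e o * g o = monomial e (1 : K) := by
    intro e he
    have h1 := hq e he
    have h2 : ∑ o, hh e o * g o = homogeneousComponent N (∑ o, q e o * g o) := by
      rw [map_sum]
      apply Finset.sum_congr rfl
      intro o _
      rw [homogeneousComponent_mul_homogeneous _ _ (hgδ o) (hδN o)]
    rw [h2, h1, homogeneousComponent_of_mem
      ((mem_homogeneousSubmodule _ _).mpr (isHomogeneous_monomial _ he)), if_pos rfl]

  -- the affine-in-c operator T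
  set T : (Fin n →₀ ℕ) → MvPolynomial (Fin n) K → MvPolynomial (Fin n) K :=
    fun e c => hh e none * c + ∑ j : Fin n, hh e (some j) * pderiv j c with hT
  have hTc₀ : ∀ e : Fin n →₀ ℕ, Finsupp.degree e = N → T e c₀ = monomial e (1 : K) := by
    intro e he
    rw [← hwit e he, Fintype.sum_option]
    rfl
  have hTsum : ∀ (e : Fin n →₀ ℕ) (s : Finset (Fin n →₀ ℕ))
      (φ : (Fin n →₀ ℕ) → MvPolynomial (Fin n) K),
      T e (∑ w ∈ s, φ w) = ∑ w ∈ s, T e (φ w) := by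
    intro e s φ
    simp only [hT, map_sum, Finset.mul_sum, Finset.sum_add_distrib]
    rw [Finset.sum_comm]
  have hTsmul : ∀ (e : Fin n →₀ ℕ) (r : K) (p : MvPolynomial (Fin n) K),
      T e (r • p) = r • T e p := by
    intro e r p
    simp only [hT, MvPolynomial.smul_eq_C_mul, pderiv_C_mul, mul_add, Finset.mul_sum]
    congr 1
    · ring
    · exact Finset.sum_congr rfl fun j _ => by ring
  have hThom : ∀ (e : Fin n →₀ ℕ) (c : MvPolynomial (Fin n) K), c.IsHomogeneous dN →
      (T e c).IsHomogeneous N := by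
    intro e c hc
    have hδnone : δ none = dN := rfl
    have hδsome : ∀ j : Fin n, δ (some j) = dN - 1 := fun _ => rfl
    apply MvPolynomial.IsHomogeneous.add
    · have h1 := (hhhom e none).mul hc
      rw [hδnone] at h1
      rwa [Nat.sub_add_cancel hNd] at h1
    · apply MvPolynomial.IsHomogeneous.sum
      intro j _
      have h1 := (hhhom e (some j)).mul (isHomogeneous_pderiv hc j)
      rw [hδsome j] at h1
      have hle : dN - 1 ≤ N := by omega
      rwa [Nat.sub_add_cancel hle] at h1
  -- finsets of exponents
  set Ed : Finset (Fin n →₀ ℕ) :=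
    (Finset.Nat.antidiagonalTuple n dN).map (Finsupp.equivFunOnFinite.symm.toEmbedding) with hEdd
  have hEd : ∀ w : Fin n →₀ ℕ, w ∈ Ed ↔ Finsupp.degree w = dN := by
    intro w
    rw [hEdd, Finset.mem_map_equiv, Finset.Nat.mem_antidiagonalTuple, degree_fin_sum]
    rfl
  set EN : Finset (Fin n →₀ ℕ) :=
    (Finset.Nat.antidiagonalTuple n N).map (Finsupp.equivFunOnFinite.symm.toEmbedding) with hENN
  have hEN : ∀ w : Fin n →₀ ℕ, w ∈ EN ↔ Finsupp.degree w = N := by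
    intro w
    rw [hENN, Finset.mem_map_equiv, Finset.Nat.mem_antidiagonalTuple, degree_fin_sum]
    rfl
  -- homogeneous polynomials are supported on Ed
  have hcsum : ∀ c : MvPolynomial (Fin n) K, c.IsHomogeneous dN →
      c = ∑ w ∈ Ed, monomial w (MvPolynomial.coeff w c) := by
    intro c hc
    ext d
    rw [MvPolynomial.coeff_sum]
    simp only [coeff_monomial]
    rw [Finset.sum_ite_eq' Ed d (fun w => MvPolynomial.coeff w c)]
    by_cases hd : d ∈ Ed
    · rw [if_pos hd]
    · rw [if_neg hd]
      exact hc.coeff_eq_zero (fun hdeg => hd ((hEd d).mpr hdeg))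
  -- the matrices
  set Mat : MvPolynomial (Fin n) K → Matrix EN EN K :=
    fun c => Matrix.of (fun e e' => MvPolynomial.coeff e'.val (T e.val c)) with hMat
  set DM : Matrix EN EN (MvPolynomial (Fin n →₀ ℕ) K) :=
    Matrix.of (fun e e' => ∑ w ∈ Ed,
      MvPolynomial.C (MvPolynomial.coeff e'.val (T e.val (monomial w 1))) *
        MvPolynomial.X w) with hDM
  have hDeval : ∀ c : MvPolynomial (Fin n) K, c.IsHomogeneous dN →
      MvPolynomial.eval (fun w => MvPolynomial.coeff w c) DM.det = (Mat c).det := by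
    intro c hc
    rw [RingHom.map_det]
    congr 1
    apply Matrix.ext
    intro e e'
    rw [RingHom.mapMatrix_apply, Matrix.map_apply]
    show MvPolynomial.eval _ (∑ w ∈ Ed,
      MvPolynomial.C (MvPolynomial.coeff e'.val (T e.val (monomial w 1))) *
        MvPolynomial.X w) = MvPolynomial.coeff e'.val (T e.val c)
    rw [map_sum]
    simp only [map_mul, eval_C, eval_X]
    conv_rhs => rw [hcsum c hc, hTsum]
    rw [MvPolynomial.coeff_sum]
    apply Finset.sum_congr rfl
    intro w _
    have hm : (monomial w (MvPolynomial.coeff w c) : MvPolynomial (Fin n) K)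
        = (MvPolynomial.coeff w c) • monomial w (1 : K) := by
      rw [smul_monomial, smul_eq_mul, mul_one]
    rw [hm, hTsmul, MvPolynomial.coeff_smul, smul_eq_mul, mul_comm]
  have hMc₀ : Mat c₀ = 1 := by
    apply Matrix.ext
    intro e e'
    rw [Matrix.one_apply]
    show MvPolynomial.coeff e'.val (T e.val c₀) = _
    rw [hTc₀ e.val ((hEN e.val).mp e.2), coeff_monomial]
    by_cases h : e = e'
    · rw [if_pos (by rw [h]), if_pos h]
    · rw [if_neg (fun hv => h (Subtype.ext hv)), if_neg h]
  refine ⟨DM.det, ?_, ?_⟩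
  · rw [hDeval c₀ hhom, hMc₀, Matrix.det_one]
    exact one_ne_zero
  · intro c hc hD u hu0 hud
    rw [hDeval c hc] at hD
    have hunit : IsUnit (Mat c).det := isUnit_iff_ne_zero.mpr hD
    have hinv := Matrix.nonsing_inv_mul (Mat c) hunit
    have hNpos : 0 < N := by
      have h1 : 1 * 1 ≤ n * k := Nat.mul_le_mul hn (by omega)
      omega
    have hTz : ∀ w : EN, eval u (T w.val c) = 0 := by
      intro w
      show eval u (hh w.val none * c + ∑ j : Fin n, hh w.val (some j) * pderiv j c) = 0
      rw [map_add, map_mul, hu0, mul_zero, zero_add, map_sum]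
      apply Finset.sum_eq_zero
      intro j _
      rw [map_mul, hud j, mul_zero]
    have hui : ∀ i : Fin n, u i = 0 := by
      intro i
      have heiN : Finsupp.degree (Finsupp.single i N) = N := degree_single i N
      have heImem : Finsupp.single i N ∈ EN := (hEN _).mpr heiN
      set eI : EN := ⟨Finsupp.single i N, heImem⟩ with heI
      set P : MvPolynomial (Fin n) K := ∑ w : EN, ((Mat c)⁻¹ eI w) • T w.val c with hP
      have hPm : P = monomial (Finsupp.single i N) (1 : K) := by
        ext d
        rw [hP, MvPolynomial.coeff_sum]
        simp only [MvPolynomial.coeff_smul, smul_eq_mul]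
        by_cases hd : Finsupp.degree d = N
        · set dI : EN := ⟨d, (hEN d).mpr hd⟩ with hdI
          have hrow : (∑ w : EN, (Mat c)⁻¹ eI w * MvPolynomial.coeff d (T w.val c))
              = ((Mat c)⁻¹ * Mat c) eI dI := by
            rw [Matrix.mul_apply]
            rfl
          rw [hrow, hinv, Matrix.one_apply, coeff_monomial]
          by_cases h : (Finsupp.single i N) = d
          · rw [if_pos h, if_pos (Subtype.ext h)]
          · rw [if_neg (fun hv => h (congrArg Subtype.val hv)), if_neg h]
        · have hz : ∀ w : EN, MvPolynomial.coeff d (T w.val c) = 0 := fun w =>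
            (hThom w.val c hc).coeff_eq_zero hd
          simp only [hz, mul_zero, Finset.sum_const_zero]
          rw [coeff_monomial, if_neg]
          intro h
          exact hd (h ▸ heiN)
      have hev := congrArg (eval u) hPm
      rw [hP] at hev
      rw [map_sum] at hev
      simp only [MvPolynomial.smul_eq_C_mul, map_mul, eval_C, hTz, mul_zero,
        Finset.sum_const_zero] at hev
      rw [eval_monomial, Finsupp.prod_single_index (by simp)] at hev
      have huiN : u i ^ N = 0 := by simpa using hev.symm
      exact pow_eq_zero_iff (by omega : N ≠ 0) |>.mp huiN
    funext i
    exact hui i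


end CBF3

namespace CBFW

variable {K : Type} [Field K]

-- helpers about eval/pderiv of monomials
section helpers
variable {n : ℕ} (u : Fin n → K)

lemma heval_mon (e : Fin n →₀ ℕ) :
    eval u (monomial e (1 : K)) = ∏ x : Fin n, u x ^ e x := by
  rw [eval_monomial, one_mul]
  exact Finsupp.prod_fintype _ _ (fun _ => pow_zero _)

lemma hpe_mon (e : Fin n →₀ ℕ) (i : Fin n) :
    eval u (pderiv i (monomial e (1 : K))) =
      (e i : K) * ∏ x : Fin n, u x ^ ((e - Finsupp.single i 1 : Fin n →₀ ℕ) x) := by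
  rw [pderiv_monomial, eval_monomial, one_mul]
  congr 1
  exact Finsupp.prod_fintype _ _ (fun _ => pow_zero _)

lemma hprod_zero (g : Fin n →₀ ℕ) (x : Fin n) (hx : u x = 0) (hg : 0 < g x) :
    (∏ y : Fin n, u y ^ g y) = 0 :=
  Finset.prod_eq_zero (Finset.mem_univ x) (by rw [hx, zero_pow (by omega)])

lemma hprod_single (a : Fin n) (r : ℕ) :
    (∏ x : Fin n, u x ^ (Finsupp.single a r) x) = u a ^ r := by
  rw [Finset.prod_eq_single a]
  · rw [Finsupp.single_apply, if_pos rfl]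
  · intro b _ hb
    rw [Finsupp.single_apply, if_neg (Ne.symm hb), pow_zero]
  · intro h
    exact absurd (Finset.mem_univ a) h

lemma hsub_single_eq (a : Fin n) (r : ℕ) :
    Finsupp.single a r - Finsupp.single a 1 = Finsupp.single a (r - 1) := by
  ext x
  rw [Finsupp.tsub_apply]
  rcases eq_or_ne a x with rfl | hx
  · simp
  · simp [Finsupp.single_apply, hx]

lemma hsub_pair (a b : Fin n) (r s : ℕ) (hab : a ≠ b) :
    (Finsupp.single a r + Finsupp.single b s) - Finsupp.single b s
      = Finsupp.single a r := by
  ext x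
  rw [Finsupp.tsub_apply, Finsupp.add_apply]
  rcases eq_or_ne b x with rfl | hx
  · simp [Finsupp.single_apply, hab]
  · simp [Finsupp.single_apply, hx]

lemma hpair_apply (a b : Fin n) (r s : ℕ) (x : Fin n) :
    (Finsupp.single a r + Finsupp.single b s) x
      = (if a = x then r else 0) + (if b = x then s else 0) := by
  rw [Finsupp.add_apply, Finsupp.single_apply, Finsupp.single_apply]

end helpers


-- degree facts
lemma deg_single {n : ℕ} (a : Fin n) (r : ℕ) : Finsupp.degree (Finsupp.single a r) = r := by
  classical
  simp [Finsupp.degree_eq_weight_one, Finsupp.weight_apply, Finsupp.sum_single_index]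

lemma deg_add {n : ℕ} (a b : Fin n →₀ ℕ) :
    Finsupp.degree (a + b) = Finsupp.degree a + Finsupp.degree b := by
  simp only [Finsupp.degree_eq_weight_one, map_add]

lemma deg_pair {n : ℕ} (a b : Fin n) (r s : ℕ) :
    Finsupp.degree (Finsupp.single a r + Finsupp.single b s) = r + s := by
  rw [deg_add, deg_single, deg_single]

section witnesses
variable (K)
variable [CharP K 2]

/-- odd degree: Fermat -/
lemma witness_odd (n d : ℕ) (hn : 0 < n) (hd : d % 2 = 1) :
    ∃ c₀ : MvPolynomial (Fin n) K, c₀.IsHomogeneous d ∧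
      ∀ u : Fin n → K, eval u c₀ = 0 → (∀ i, eval u (pderiv i c₀) = 0) → u = 0 := by
  classical
  refine ⟨∑ i : Fin n, monomial (Finsupp.single i d) (1 : K), ?_, ?_⟩
  · apply IsHomogeneous.sum
    intro i _
    exact isHomogeneous_monomial _ (deg_single i d)
  · intro u hc0 hud
    have hdK : ((d : ℕ) : K) = 1 := by
      obtain ⟨m, hm⟩ : ∃ m, d = 2 * m + 1 := ⟨d / 2, by omega⟩
      have h2 : (2 : K) = 0 := by exact_mod_cast CharP.cast_eq_zero K 2
      rw [hm]
      push_cast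
      rw [h2]
      ring
    have hEv : ∀ i : Fin n, eval u (pderiv i (∑ l : Fin n, monomial (Finsupp.single l d) (1 : K)))
        = u i ^ (d - 1) := by
      intro i
      rw [map_sum, map_sum]
      rw [Finset.sum_eq_single i]
      · rw [hpe_mon, Finsupp.single_apply, if_pos rfl, hdK, hsub_single_eq, hprod_single, one_mul]
      · intro b _ hb
        rw [hpe_mon, Finsupp.single_apply, if_neg hb]
        simp
      · intro h
        exact absurd (Finset.mem_univ i) h
    rcases eq_or_lt_of_le (show 1 ≤ d by omega) with h1 | h1
    · exfalso
      have := hud ⟨0, hn⟩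
      rw [hEv, ← h1] at this
      simpa using this
    · funext i
      have := hud i
      rw [hEv] at this
      exact pow_eq_zero_iff (show d - 1 ≠ 0 by omega) |>.mp this


lemma hpe_sum {n : ℕ} (u : Fin n → K) (s : Finset ℕ) (E : ℕ → (Fin n →₀ ℕ)) (i : Fin n) :
    eval u (pderiv i (∑ l ∈ s, monomial (E l) (1 : K)))
      = ∑ l ∈ s, (E l i : K) *
          ∏ x : Fin n, u x ^ ((E l - Finsupp.single i 1 : Fin n →₀ ℕ) x) := by
  rw [map_sum, map_sum]
  exact Finset.sum_congr rfl fun l _ => hpe_mon u (E l) i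

lemma heval_sum {n : ℕ} (u : Fin n → K) (s : Finset ℕ) (E : ℕ → (Fin n →₀ ℕ)) :
    eval u (∑ l ∈ s, monomial (E l) (1 : K))
      = ∑ l ∈ s, ∏ x : Fin n, u x ^ (E l) x := by
  rw [map_sum]
  exact Finset.sum_congr rfl fun l _ => heval_mon u (E l)

/-- degree 0: a constant -/
lemma witness_zero (n : ℕ) :
    ∃ c₀ : MvPolynomial (Fin n) K, c₀.IsHomogeneous 0 ∧
      ∀ u : Fin n → K, eval u c₀ = 0 → (∀ i, eval u (pderiv i c₀) = 0) → u = 0 := by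
  refine ⟨monomial 0 (1 : K), isHomogeneous_monomial _ (map_zero _), ?_⟩
  intro u hc0 _
  exfalso
  rw [heval_mon] at hc0
  simp at hc0

/-- degree 2 : sum of hyperbolic pairs plus possibly one square -/
lemma witness_two (n : ℕ) (hn : 0 < n) :
    ∃ c₀ : MvPolynomial (Fin n) K, c₀.IsHomogeneous 2 ∧
      ∀ u : Fin n → K, eval u c₀ = 0 → (∀ i, eval u (pderiv i c₀) = 0) → u = 0 := by
  classical
  set v : ℕ → Fin n := fun j => ⟨j % n, Nat.mod_lt _ hn⟩ with hv
  have hvval : ∀ j, j < n → (v j).val = j := fun j hj => by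
    simp [hv, Nat.mod_eq_of_lt hj]
  have hvinj : ∀ a b, a < n → b < n → v a = v b → a = b := by
    intro a b ha hb hab
    have := congrArg Fin.val hab
    rwa [hvval a ha, hvval b hb] at this
  set m := n / 2 with hm
  set E : ℕ → (Fin n →₀ ℕ) :=
    fun j => Finsupp.single (v (2 * j)) 1 + Finsupp.single (v (2 * j + 1)) 1 with hE
  set tail : MvPolynomial (Fin n) K :=
    if n % 2 = 1 then monomial (Finsupp.single (v (n - 1)) 2) 1 else 0 with htail
  refine ⟨(∑ j ∈ Finset.range m, monomial (E j) (1 : K)) + tail, ?_, ?_⟩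
  · apply IsHomogeneous.add
    · apply IsHomogeneous.sum
      intro j _
      exact isHomogeneous_monomial _ (deg_pair _ _ _ _)
    · rw [htail]
      split
      · exact isHomogeneous_monomial _ (deg_single _ _)
      · exact isHomogeneous_zero _ _ _
  · intro u hc0 hud
    -- pairs vanish
    have hpair : ∀ j, j < m → u (v (2 * j)) = 0 ∧ u (v (2 * j + 1)) = 0 := by
      intro j hj
      have hb1 : 2 * j < n := by omega
      have hb2 : 2 * j + 1 < n := by omega
      have hne : v (2 * j) ≠ v (2 * j + 1) := by
        intro h; have := hvinj _ _ hb1 hb2 h; omega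
      constructor
      · have h1 := hud (v (2 * j + 1))
        rw [map_add, map_add, hpe_sum] at h1
        have htailz : eval u (pderiv (v (2 * j + 1)) tail) = 0 := by
          rw [htail]
          split
          · rw [hpe_mon, Finsupp.single_apply, if_neg, Nat.cast_zero, zero_mul]
            intro h
            have := hvinj _ _ (by omega) hb2 h
            omega
          · simp
        rw [htailz, add_zero] at h1
        rw [Finset.sum_eq_single j] at h1
        · rw [hE] at h1
          simp only at h1
          rw [hpair_apply, if_neg, if_pos rfl] at h1
          · rw [hsub_pair _ _ _ _ hne, hprod_single] at h1
            simpa using h1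
          · intro h
            have := hvinj _ _ hb1 hb2 h
            omega
        · intro b hb hbj
          rw [hE]
          simp only
          rw [hpair_apply, if_neg, if_neg, Nat.cast_zero]
          · ring
          · intro h
            have := hvinj _ _ (by simp at hb; omega) hb2 h
            omega
          · intro h
            have := hvinj _ _ (by simp at hb; omega) hb2 h
            omega
        · intro h
          exact absurd (Finset.mem_range.mpr hj) h
      · have h1 := hud (v (2 * j))
        rw [map_add, map_add, hpe_sum] at h1
        have htailz : eval u (pderiv (v (2 * j)) tail) = 0 := by
          rw [htail]
          split
          · rename_i hodd
            rw [hpe_mon, Finsupp.single_apply, if_neg, Nat.cast_zero, zero_mul]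
            intro h
            have := hvinj _ _ (by omega) hb1 h
            omega
          · simp
        rw [htailz, add_zero] at h1
        rw [Finset.sum_eq_single j] at h1
        · rw [hE] at h1
          simp only at h1
          rw [hpair_apply, if_pos rfl, if_neg (Ne.symm hne)] at h1
          rw [add_comm (Finsupp.single (v (2*j)) 1), hsub_pair _ _ _ _ (Ne.symm hne),
            hprod_single] at h1
          simpa using h1
        · intro b hb hbj
          rw [hE]
          simp only
          rw [hpair_apply, if_neg, if_neg, Nat.cast_zero]
          · ring
          · intro h
            have := hvinj _ _ (by simp at hb; omega) hb1 h
            omega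
          · intro h
            have := hvinj _ _ (by simp at hb; omega) hb1 h
            omega
        · intro h
          exact absurd (Finset.mem_range.mpr hj) h
    -- the odd leftover
    have hlast : ∀ hodd : n % 2 = 1, u (v (n - 1)) = 0 := by
      intro hodd
      rw [map_add, heval_sum] at hc0
      have hz : ∀ j ∈ Finset.range m, (∏ x : Fin n, u x ^ (E j) x) = 0 := by
        intro j hj
        rw [Finset.mem_range] at hj
        apply hprod_zero u (E j) (v (2 * j)) (hpair j hj).1
        rw [hE]
        simp only
        rw [hpair_apply, if_pos rfl]
        omega
      rw [Finset.sum_eq_zero hz, zero_add, htail, if_pos hodd, heval_mon, hprod_single] at hc0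
      exact pow_eq_zero_iff (by omega) |>.mp hc0
    funext i
    have hiv : v i.val = i := by
      apply Fin.ext
      rw [hvval _ i.isLt]
    by_cases hi : i.val < 2 * m
    · rcases Nat.even_or_odd i.val with he | ho
      · obtain ⟨t, ht⟩ := he
        have : i.val = 2 * t := by omega
        have h := (hpair t (by omega)).1
        rw [← this] at h
        rwa [hiv] at h
      · obtain ⟨t, ht⟩ := ho
        have h := (hpair t (by omega)).2
        rw [show 2 * t + 1 = i.val by omega] at h
        rwa [hiv] at h
    · have hodd : n % 2 = 1 := by omega
      have hieq : i.val = n - 1 := by omega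
      have h := hlast hodd
      rw [← hieq] at h
      rwa [hiv] at h


/-- even degree at least 4 : chain witness -/
lemma witness_even (n d : ℕ) (hn : 2 ≤ n) (hd : d % 2 = 0) (hd4 : 4 ≤ d) :
    ∃ c₀ : MvPolynomial (Fin n) K, c₀.IsHomogeneous d ∧
      ∀ u : Fin n → K, eval u c₀ = 0 → (∀ i, eval u (pderiv i c₀) = 0) → u = 0 := by
  classical
  have hn0 : 0 < n := by omega
  set v : ℕ → Fin n := fun j => ⟨j % n, Nat.mod_lt _ hn0⟩ with hv
  have hvval : ∀ j, j < n → (v j).val = j := fun j hj => by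
    simp [hv, Nat.mod_eq_of_lt hj]
  have hvinj : ∀ a b, a < n → b < n → v a = v b → a = b := by
    intro a b ha hb hab
    have := congrArg Fin.val hab
    rwa [hvval a ha, hvval b hb] at this
  have hdK : ((d : ℕ) : K) = 0 := by
    have h2 : ((2 : ℕ) : K) = 0 := CharP.cast_eq_zero K 2
    obtain ⟨t, ht⟩ : ∃ t, d = 2 * t := ⟨d / 2, by omega⟩
    rw [ht]
    push_cast
    push_cast at h2
    rw [h2]
    ring
  set E : ℕ → (Fin n →₀ ℕ) :=
    fun j => Finsupp.single (v j) (d - 1) + Finsupp.single (v (j + 1)) 1 with hE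
  set tail : MvPolynomial (Fin n) K := monomial (Finsupp.single (v (n - 1)) d) 1 with htail
  refine ⟨(∑ j ∈ Finset.range (n - 1), monomial (E j) (1 : K)) + tail, ?_, ?_⟩
  · apply IsHomogeneous.add
    · apply IsHomogeneous.sum
      intro j _
      have : Finsupp.degree (E j) = d := by
        rw [hE]
        simp only
        rw [deg_pair]
        omega
      exact isHomogeneous_monomial _ this
    · exact isHomogeneous_monomial _ (deg_single _ _)
  · intro u hc0 hud
    have hstep : ∀ j, j < n - 1 → (∀ l, j < l → l < n - 1 → u (v l) = 0) → u (v j) = 0 := by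
      intro j hj hknown
      have hb1 : j < n := by omega
      have hb2 : j + 1 < n := by omega
      have hne : v j ≠ v (j + 1) := by
        intro h; have := hvinj _ _ hb1 hb2 h; omega
      have h1 := hud (v (j + 1))
      rw [map_add, map_add, hpe_sum] at h1
      have htailz : eval u (pderiv (v (j + 1)) tail) = 0 := by
        rw [htail, hpe_mon, Finsupp.single_apply]
        split
        · rw [hdK, zero_mul]
        · rw [Nat.cast_zero, zero_mul]
      rw [htailz, add_zero] at h1
      rw [Finset.sum_eq_single j] at h1
      · rw [hE] at h1
        simp only at h1
        rw [hpair_apply, if_neg hne, if_pos rfl] at h1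
        rw [hsub_pair _ _ _ _ hne, hprod_single] at h1
        rw [zero_add, Nat.cast_one, one_mul] at h1
        exact pow_eq_zero_iff (show d - 1 ≠ 0 by omega) |>.mp h1
      · intro b hb hbj
        rw [Finset.mem_range] at hb
        rcases eq_or_ne b (j + 1) with rfl | hbj1
        · have hval : u (v (j + 1)) = 0 := hknown (j + 1) (by omega) hb
          apply mul_eq_zero_of_right
          apply hprod_zero u _ (v (j + 1)) hval
          rw [Finsupp.tsub_apply]
          rw [hE]
          simp only
          rw [hpair_apply, if_pos rfl, if_neg, Finsupp.single_apply, if_pos rfl]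
          · omega
          · intro h
            have := hvinj _ _ (by omega) hb2 h
            omega
        · rw [hE]
          simp only
          rw [hpair_apply, if_neg, if_neg, Nat.cast_zero]
          · ring
          · intro h
            have := hvinj _ _ (by omega) hb2 h
            omega
          · intro h
            have := hvinj _ _ (by omega) hb2 h
            omega
      · intro h
        exact absurd (Finset.mem_range.mpr hj) h
    have hall : ∀ j, j < n - 1 → u (v j) = 0 := by
      have haux : ∀ t j, j < n - 1 → n - 1 - j ≤ t → u (v j) = 0 := by
        intro t
        induction t with
        | zero => intro j hj h0; omega
        | succ t ih =>
          intro j hj hle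
          apply hstep j hj
          intro l hjl hl
          exact ih l hl (by omega)
      exact fun j hj => haux (n - 1) j hj (by omega)
    have hlast : u (v (n - 1)) = 0 := by
      rw [map_add, heval_sum] at hc0
      have hz : ∀ j ∈ Finset.range (n - 1), (∏ x : Fin n, u x ^ (E j) x) = 0 := by
        intro j hj
        rw [Finset.mem_range] at hj
        apply hprod_zero u (E j) (v j) (hall j hj)
        rw [hE]
        simp only
        rw [hpair_apply, if_pos rfl]
        omega
      rw [Finset.sum_eq_zero hz, zero_add, htail, heval_mon, hprod_single] at hc0
      exact pow_eq_zero_iff (by omega) |>.mp hc0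
    funext i
    have hiv : v i.val = i := by
      apply Fin.ext
      rw [hvval _ i.isLt]
    by_cases hi : i.val < n - 1
    · have h := hall i.val hi
      rwa [hiv] at h
    · have hieq : i.val = n - 1 := by have := i.isLt; omega
      have h := hlast
      rw [← hieq] at h
      rwa [hiv] at h

/-- combined witness lemma -/
lemma witness (n d : ℕ) (hn : 2 ≤ n) :
    ∃ c₀ : MvPolynomial (Fin n) K, c₀.IsHomogeneous d ∧
      ∀ u : Fin n → K, eval u c₀ = 0 → (∀ i, eval u (pderiv i c₀) = 0) → u = 0 := by
  rcases Nat.even_or_odd d with he | ho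
  · rcases Nat.lt_or_ge d 4 with h4 | h4
    · rcases Nat.eq_zero_or_pos d with rfl | hpos
      · exact witness_zero K n
      · have : d = 2 := by
          rcases he with ⟨t, ht⟩
          omega
        rw [this]
        exact witness_two K n (by omega)
    · exact witness_even K n d hn (by rcases he with ⟨t,ht⟩; omega) h4
  · exact witness_odd K n d (by omega) (by rcases ho with ⟨t,ht⟩; omega)

end witnesses

end CBFW

section AuxBridge

open MvPolynomial

variable (K : Type) [Field K]

lemma isHomogZ_toHomog {n : ℕ} {d : ℤ} {p : MvPolynomial (Fin n) K} {m : ℕ}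
    (hd : d = (m : ℤ)) (hp : IsHomogZ K n d p) : p.IsHomogeneous m := by
  rw [CBF.isHomogeneous_iff_degree]
  intro e he
  have h1 := hp e he
  rw [hd] at h1
  rw [CBF.degree_fin_sum]
  have h2 : ((∑ i : Fin n, e i : ℕ) : ℤ) = (m : ℤ) := by
    rw [Nat.cast_sum]
    exact h1
  exact_mod_cast h2

lemma homog_toIsHomogZ {n : ℕ} {m : ℕ} {p : MvPolynomial (Fin n) K}
    (hp : p.IsHomogeneous m) : IsHomogZ K n (m : ℤ) p := by
  intro e he
  have h1 := (CBF.isHomogeneous_iff_degree.mp hp) e he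
  rw [CBF.degree_fin_sum] at h1
  rw [← Nat.cast_sum]
  exact_mod_cast h1

lemma smooth_reduction {n : ℕ} (abcf : Fin 4 → MvPolynomial (Fin n) K)
    (h : ∀ u : Fin n → K, u ≠ 0 → eval u (abcf 2) = 0 →
      ∃ i, eval u (pderiv i (abcf 2)) ≠ 0) :
    JacobiSmoothOn K (specialMemberX K abcf)
      {p | InCone K p ∧ p.2 0 = 0 ∧ p.2 1 = 0} := by
  rintro ⟨uu, vv⟩ ⟨⟨hu, hvne⟩, hv0, hv1⟩ hg
  replace hv0 : vv 0 = 0 := hv0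
  replace hv1 : vv 1 = 0 := hv1
  have hv2 : vv 2 ≠ 0 := by
    intro h2
    apply hvne
    funext j
    fin_cases j
    · exact hv0
    · exact hv1
    · exact h2
  have helim : ∀ q : MvPolynomial (Fin n) K,
      eval (Sum.elim uu vv) (rename Sum.inl q) = eval uu q := by
    intro q
    rw [eval_rename]
    rfl
  have hgval : evalPt K (uu, vv) (specialMemberX K abcf)
      = eval uu (abcf 2) * vv 2 ^ 2 := by
    simp only [evalPt, specialMemberX, map_add, map_mul, map_pow, helim, eval_X]
    show _ * vv 0 ^ 2 + _ * vv 1 ^ 2 + _ * vv 2 ^ 2 + _ * vv 0 * vv 1 = _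
    rw [hv0, hv1]
    ring
  have hc0 : eval uu (abcf 2) = 0 := by
    rw [hgval] at hg
    exact (mul_eq_zero.mp hg).resolve_right (pow_ne_zero _ hv2)
  obtain ⟨i, hi⟩ := h uu hu hc0
  refine ⟨Sum.inl i, ?_⟩
  have hXz : ∀ j : Fin 3,
      pderiv (Sum.inl i) (X (Sum.inr j) : Cox K n 3) = 0 :=
    fun j => pderiv_X_of_ne (by simp)
  have hder : pderiv (Sum.inl i) (specialMemberX K abcf)
      = rename Sum.inl (pderiv i (abcf 0)) * X (Sum.inr 0) ^ 2
      + rename Sum.inl (pderiv i (abcf 1)) * X (Sum.inr 1) ^ 2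
      + rename Sum.inl (pderiv i (abcf 2)) * X (Sum.inr 2) ^ 2
      + rename Sum.inl (pderiv i (abcf 3)) * X (Sum.inr 0) * X (Sum.inr 1) := by
    simp only [specialMemberX, map_add, pderiv_mul, pderiv_pow, hXz,
      pderiv_rename Sum.inl_injective]
    ring
  have hdval : evalPt K (uu, vv) (pderiv (Sum.inl i) (specialMemberX K abcf))
      = eval uu (pderiv i (abcf 2)) * vv 2 ^ 2 := by
    rw [hder]
    simp only [evalPt, map_add, map_mul, map_pow, helim, eval_X]
    show _ * vv 0 ^ 2 + _ * vv 1 ^ 2 + _ * vv 2 ^ 2 + _ * vv 0 * vv 1 = _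
    rw [hv0, hv1]
    ring
  rw [hdval]
  exact mul_ne_zero hi (pow_ne_zero _ hv2)

end AuxBridge

/-- **Lemma 3.7.**  Over an algebraically closed field of characteristic 2, the
special member `X = {a x² + b y² + c z² + f x y = 0} ⊂ P_n(λ,μ,ν)` with `a,b,c,f`
general is smooth along `X ∖ X° = X ∩ (x = y = 0)`. -/
theorem lem_X_smooth_along_xy_locus_char_two
    (K : Type) [Field K] [IsAlgClosed K] [CharP K 2]
    (n : ℕ) (hn : 3 ≤ n) (lam mu nu : ℤ)
    (h0 : 0 < lam) (h1 : lam ≤ mu) (h2 : mu ≤ nu) (h3 : nu ≤ lam + mu)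
    (h4 : 3 ≤ nu) :
    GenerallyHolds4 K n ![-lam + mu + nu, lam - mu + nu, lam + mu - nu, nu]
      (fun abcf =>
        JacobiSmoothOn K (specialMemberX K abcf)
          {p | InCone K p ∧ p.2 0 = 0 ∧ p.2 1 = 0}) := by
  classical
  have hd0 : (0 : ℤ) ≤ lam + mu - nu := by omega
  set dN : ℕ := (lam + mu - nu).toNat with hdN
  have hdZ : lam + mu - nu = (dN : ℤ) := by
    rw [hdN]
    omega
  obtain ⟨c₀, hc₀hom, hc₀sm⟩ := CBFW.witness K n dN (by omega)
  obtain ⟨D, hD₀, hDall⟩ := CBF3.aux_generic n dN (by omega) c₀ hc₀hom hc₀sm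
  have hdegs2 : (![-lam + mu + nu, lam - mu + nu, lam + mu - nu, nu] : Fin 4 → ℤ) 2
      = lam + mu - nu := rfl
  refine ⟨rename (fun e => ((2 : Fin 4), e)) D,
    ⟨(fun i => if i = 2 then c₀ else 0), ?_, ?_⟩, ?_⟩
  · intro i
    by_cases hi : i = 2
    · subst hi
      simp only [if_pos rfl, hdegs2]
      rw [hdZ]
      exact homog_toIsHomogZ K hc₀hom
    · simp only [if_neg hi]
      intro e he
      simp at he
  · unfold evalCoeff4
    rw [eval_rename]
    have hfun : ((fun q : Fin 4 × (Fin n →₀ ℕ) =>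
        ((fun i => if i = 2 then c₀ else 0) q.1).coeff q.2) ∘ (fun e => ((2 : Fin 4), e)))
        = fun e => MvPolynomial.coeff e c₀ := by
      funext e
      simp
    rw [hfun]
    exact hD₀
  · intro abcf hhom hD
    apply smooth_reduction
    intro u hu hcu
    by_contra hcon
    push_neg at hcon
    apply hu
    apply hDall (abcf 2) (isHomogZ_toHomog K hdZ (hdegs2 ▸ hhom 2)) ?_ u hcu hcon
    unfold evalCoeff4 at hD
    rw [eval_rename] at hD
    exact hD


end ConicBundleFormalization
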